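/- arXiv:2403.01174 — 3 statements merged into one kernel-verified Lean document; each statement's English description precedes it below -/
import Mathlib

section
/- Let R and S be real symmetric n×n matrices, let σ² > 0, and set Q = R + σ²S. Suppose Q is positive definite and R is positive semidefinite and singular (i.e., 0 is an eigenvalue of R). Then the largest eigenvalue of Q⁻¹S equals 1/σ²: (i) there exists a nonzero vector v ∈ ℝⁿ with σ² S v = Q v, and (ii) for every real number μ and every nonzero v ∈ ℝⁿ with S v = μ Q v, one has μ ≤ 1/σ². In particular σ² = 1/λ_max(Q⁻¹S). -/
open Matrix

/-- If `Q = R + σ²S` is positive definite, `R` is symmetric positive semidefinite and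
singular, and `S` is symmetric, then the largest eigenvalue of `Q⁻¹S` equals `1/σ²`. -/
theorem stmt1 (n : ℕ) (R S : Matrix (Fin n) (Fin n) ℝ)
    (hRsymm : R.IsSymm) (hSsymm : S.IsSymm)
    (σ2 : ℝ) (hσ2 : 0 < σ2)
    (Q : Matrix (Fin n) (Fin n) ℝ) (hQ : Q = R + σ2 • S)
    (hQpd : Q.PosDef) (hRpsd : R.PosSemidef)
    (hRsing : ∃ v : Fin n → ℝ, v ≠ 0 ∧ R.mulVec v = 0) :
    (∃ v : Fin n → ℝ, v ≠ 0 ∧ σ2 • S.mulVec v = Q.mulVec v) ∧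
    (∀ (μ : ℝ) (v : Fin n → ℝ), v ≠ 0 → S.mulVec v = μ • Q.mulVec v → μ ≤ 1 / σ2) := by
  constructor
  · obtain ⟨v, hv, hRv⟩ := hRsing
    refine ⟨v, hv, ?_⟩
    rw [hQ, add_mulVec, hRv, zero_add, smul_mulVec]
  · intro μ v hv hSv
    have hQv : 0 < v ⬝ᵥ Q.mulVec v := by simpa using hQpd.dotProduct_mulVec_pos hv
    have hRv : 0 ≤ v ⬝ᵥ R.mulVec v := by simpa using hRpsd.dotProduct_mulVec_nonneg v
    have key : v ⬝ᵥ Q.mulVec v = v ⬝ᵥ R.mulVec v + σ2 * (μ * (v ⬝ᵥ Q.mulVec v)) := by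
      conv_lhs => rw [hQ, add_mulVec, dotProduct_add, smul_mulVec, hSv,
        dotProduct_smul, dotProduct_smul, smul_eq_mul, smul_eq_mul]
    have h1 : (1 - σ2 * μ) * (v ⬝ᵥ Q.mulVec v) = v ⬝ᵥ R.mulVec v := by linarith
    have h2 : 0 ≤ 1 - σ2 * μ := by
      by_contra h
      push_neg at h
      nlinarith
    rw [le_div_iff₀ hσ2]
    linarith
end

section
/- Let (y_i^h)_{i≥1} ⊂ ℝ³ and (z_i^{ho})_{i≥1} ⊂ ℝ³ be deterministic sequences with ‖y_i^h‖ ≤ C_y and ‖z_i^{ho}‖ ≤ C_z for all i, and let (ε_i)_{i≥1} be independent ℝ²-valued random vectors with E[ε_i] = 0, E[ε_i ε_iᵀ] = σ² I₂, and E‖ε_i‖⁴ ≤ κ < ∞. Set ε_i^h = (ε_{i1}, ε_{i2}, 0)ᵀ, z_i^h = z_i^{ho} + ε_i^h, L_i = y_i^{h⊤} ⊗ I₃ ∈ ℝ^{3×9}, Q_m = (1/m) ∑_{i=1}^m L_iᵀ z_i^h z_i^{h⊤} L_i, Q_m^o = (1/m) ∑_{i=1}^m L_iᵀ z_i^{ho}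 z_i^{ho⊤} L_i, and S̃_m = (1/m) ∑_{i=1}^m (y_i^h y_i^{h⊤}) ⊗ D with D = diag(1,1,0). Then Q_m = Q_m^o + σ² S̃_m + O_p(1/√m); that is, for every ε > 0 there exists a finite N such that for all m, P(‖Q_m − Q_m^o − σ² S̃_m‖_F > N/√m) < ε. -/
open MeasureTheory ProbabilityTheory Matrix

set_option maxHeartbeats 1000000 in
/-- With bounded deterministic data `y_i^h, z_i^{ho}` and independent mean-zero noises
`ε_i` with covariance `σ²I₂` and uniformly bounded fourth moments, the sample matrix
`Q_m = (1/m)∑ L_iᵀ z_i^h z_i^{h⊤} L_i` satisfies `Q_m = Q_m^o + σ² S̃_m + O_p(1/√m)`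
(deviation measured in Frobenius norm). Here matrices on `ℝ⁹ = ℝ^{3×3}` are indexed by
pairs, with `(L_iᵀ z)_{(j,k)} = y_i^h(j) z(k)`, and `D = diag(1,1,0)`. -/
theorem stmt8 {Ω : Type*} [MeasurableSpace Ω] (μpr : Measure Ω) [IsProbabilityMeasure μpr]
    (y zo : ℕ → Fin 3 → ℝ) (Cy Cz : ℝ)
    (hy : ∀ i, Real.sqrt (y i ⬝ᵥ y i) ≤ Cy)
    (hz : ∀ i, Real.sqrt (zo i ⬝ᵥ zo i) ≤ Cz)
    (eps : ℕ → Ω → Fin 2 → ℝ) (σ2 κ : ℝ)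
    (hmeas : ∀ i, Measurable (eps i))
    (hindep : iIndepFun eps μpr)
    (hmean : ∀ i a, ∫ ω, eps i ω a ∂μpr = 0)
    (hcov : ∀ i a b, ∫ ω, eps i ω a * eps i ω b ∂μpr = σ2 * (if a = b then 1 else 0))
    (hm4int : ∀ i, Integrable (fun ω => (eps i ω ⬝ᵥ eps i ω) ^ 2) μpr)
    (hm4 : ∀ i, ∫ ω, (eps i ω ⬝ᵥ eps i ω) ^ 2 ∂μpr ≤ κ)
    (epsh : ℕ → Ω → Fin 3 → ℝ) (hepsh : ∀ i ω, epsh i ω = ![eps i ω 0, eps i ω 1, 0])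
    (zh : ℕ → Ω → Fin 3 → ℝ) (hzh : ∀ i ω, zh i ω = zo i + epsh i ω)
    (D : Matrix (Fin 3) (Fin 3) ℝ) (hD : D = Matrix.diagonal ![1, 1, 0])
    (Q : ℕ → Ω → Matrix (Fin 3 × Fin 3) (Fin 3 × Fin 3) ℝ)
    (hQ : ∀ m ω p q, Q m ω p q =
      (m : ℝ)⁻¹ * ∑ i ∈ Finset.range m, (y i p.1 * zh i ω p.2) * (y i q.1 * zh i ω q.2))
    (Qo : ℕ → Matrix (Fin 3 × Fin 3) (Fin 3 × Fin 3) ℝ)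
    (hQo : ∀ m p q, Qo m p q =
      (m : ℝ)⁻¹ * ∑ i ∈ Finset.range m, (y i p.1 * zo i p.2) * (y i q.1 * zo i q.2))
    (Sm : ℕ → Matrix (Fin 3 × Fin 3) (Fin 3 × Fin 3) ℝ)
    (hSm : ∀ m p q, Sm m p q =
      (m : ℝ)⁻¹ * ∑ i ∈ Finset.range m, (y i p.1 * y i q.1) * D p.2 q.2) :
    ∀ e : ℝ, 0 < e → ∃ N : ℝ, ∀ m : ℕ,
      μpr {ω | N / Real.sqrt m <
          Real.sqrt (∑ p : Fin 3 × Fin 3, ∑ q : Fin 3 × Fin 3,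
            (Q m ω p q - Qo m p q - σ2 * Sm m p q) ^ 2)}
        < ENNReal.ofReal e := by
  classical
  intro e he
  -- nonnegativity of σ2 and κ
  have hσ2 : 0 ≤ σ2 := by
    have h := hcov 0 0 0
    simp only [if_pos, mul_one] at h
    rw [← h]
    exact integral_nonneg fun ω => mul_self_nonneg _
  have hκ : 0 ≤ κ := le_trans (integral_nonneg fun ω => sq_nonneg _) (hm4 0)
  -- componentwise bounds for y and zo
  have hyb : ∀ i (a : Fin 3), (y i a) ^ 2 ≤ Cy ^ 2 := by
    intro i a
    have h0 : (0:ℝ) ≤ y i ⬝ᵥ y i := Finset.sum_nonneg fun j _ => mul_self_nonneg _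
    have h1 : (y i a) ^ 2 ≤ y i ⬝ᵥ y i := by
      have := Finset.single_le_sum (f := fun j => y i j * y i j)
        (fun j _ => mul_self_nonneg _) (Finset.mem_univ a)
      simpa [sq, dotProduct] using this
    have h2 : y i ⬝ᵥ y i ≤ Cy ^ 2 := by
      have := pow_le_pow_left₀ (Real.sqrt_nonneg _) (hy i) 2
      rwa [Real.sq_sqrt h0] at this
    linarith
  have hzb : ∀ i (a : Fin 3), (zo i a) ^ 2 ≤ Cz ^ 2 := by
    intro i a
    have h0 : (0:ℝ) ≤ zo i ⬝ᵥ zo i := Finset.sum_nonneg fun j _ => mul_self_nonneg _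
    have h1 : (zo i a) ^ 2 ≤ zo i ⬝ᵥ zo i := by
      have := Finset.single_le_sum (f := fun j => zo i j * zo i j)
        (fun j _ => mul_self_nonneg _) (Finset.mem_univ a)
      simpa [sq, dotProduct] using this
    have h2 : zo i ⬝ᵥ zo i ≤ Cz ^ 2 := by
      have := pow_le_pow_left₀ (Real.sqrt_nonneg _) (hz i) 2
      rwa [Real.sq_sqrt h0] at this
    linarith
  -- measurability facts
  have hepsm : ∀ i (a : Fin 2), Measurable (fun ω => eps i ω a) :=
    fun i a => (measurable_pi_apply a).comp (hmeas i)
  have hEm : ∀ i (a : Fin 3), Measurable (fun ω => epsh i ω a) := by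
    intro i a
    have h : (fun ω => epsh i ω a) = fun ω => ![eps i ω 0, eps i ω 1, 0] a := by
      funext ω; rw [hepsh]
    rw [h]
    fin_cases a
    · simpa using hepsm i 0
    · simpa using hepsm i 1
    · simpa using (measurable_const : Measurable fun _ : Ω => (0:ℝ))
  have hdotm : ∀ i, Measurable (fun ω => eps i ω ⬝ᵥ eps i ω) := by
    intro i
    have h : (fun ω => eps i ω ⬝ᵥ eps i ω)
        = fun ω => eps i ω 0 * eps i ω 0 + eps i ω 1 * eps i ω 1 := by
      funext ω; simp [dotProduct, Fin.sum_univ_two]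
    rw [h]
    exact ((hepsm i 0).mul (hepsm i 0)).add ((hepsm i 1).mul (hepsm i 1))
  have hdot0 : ∀ i ω, 0 ≤ eps i ω ⬝ᵥ eps i ω :=
    fun i ω => Finset.sum_nonneg fun j _ => mul_self_nonneg _
  have hdotint : ∀ i, Integrable (fun ω => eps i ω ⬝ᵥ eps i ω) μpr := by
    intro i
    refine ((integrable_const (1:ℝ)).add (hm4int i)).mono' ((hdotm i).aestronglyMeasurable) ?_
    filter_upwards with ω
    have h0 := hdot0 i ω
    simp only [Real.norm_eq_abs, abs_of_nonneg h0, Pi.add_apply]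
    nlinarith [sq_nonneg (eps i ω ⬝ᵥ eps i ω - 1)]
  -- pointwise bounds for epsh
  have hEsq_le : ∀ i ω (a : Fin 3), (epsh i ω a) ^ 2 ≤ eps i ω ⬝ᵥ eps i ω := by
    intro i ω a
    have hd : eps i ω ⬝ᵥ eps i ω = eps i ω 0 * eps i ω 0 + eps i ω 1 * eps i ω 1 := by
      simp [dotProduct, Fin.sum_univ_two]
    rw [hepsh, hd]
    fin_cases a <;> simp <;>
      nlinarith [mul_self_nonneg (eps i ω 0), mul_self_nonneg (eps i ω 1)]
  have hEmul_le : ∀ i ω (a b : Fin 3), |epsh i ω a * epsh i ω b| ≤ eps i ω ⬝ᵥ eps i ω := by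
    intro i ω a b
    have ha := hEsq_le i ω a
    have hb := hEsq_le i ω b
    rw [abs_le]
    constructor <;>
      nlinarith [sq_nonneg (epsh i ω a + epsh i ω b), sq_nonneg (epsh i ω a - epsh i ω b)]
  have hEmulsq_le : ∀ i ω (a b : Fin 3),
      (epsh i ω a * epsh i ω b) ^ 2 ≤ (eps i ω ⬝ᵥ eps i ω) ^ 2 := by
    intro i ω a b
    have h := hEmul_le i ω a b
    have h2 := pow_le_pow_left₀ (abs_nonneg (epsh i ω a * epsh i ω b)) h 2
    rwa [sq_abs] at h2
  -- integrability of epsh components and products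
  have hEint : ∀ i (a : Fin 3), Integrable (fun ω => epsh i ω a) μpr := by
    intro i a
    refine ((integrable_const (1:ℝ)).add (hdotint i)).mono' ((hEm i a).aestronglyMeasurable) ?_
    filter_upwards with ω
    simp only [Real.norm_eq_abs, Pi.add_apply]
    nlinarith [sq_nonneg (|epsh i ω a| - 1), sq_abs (epsh i ω a), hEsq_le i ω a]
  have hEEint : ∀ i (a b : Fin 3), Integrable (fun ω => epsh i ω a * epsh i ω b) μpr := by
    intro i a b
    refine (hdotint i).mono' (((hEm i a).mul (hEm i b)).aestronglyMeasurable) ?_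
    filter_upwards with ω
    rw [Real.norm_eq_abs]
    exact hEmul_le i ω a b
  have hEEsqint : ∀ i (a b : Fin 3),
      Integrable (fun ω => (epsh i ω a * epsh i ω b) ^ 2) μpr := by
    intro i a b
    refine (hm4int i).mono' ((((hEm i a).mul (hEm i b)).pow_const 2).aestronglyMeasurable) ?_
    filter_upwards with ω
    rw [Real.norm_eq_abs, abs_of_nonneg (sq_nonneg _)]
    exact hEmulsq_le i ω a b
  -- means
  have hEmean : ∀ i (a : Fin 3), ∫ ω, epsh i ω a ∂μpr = 0 := by
    intro i a
    have h : (fun ω => epsh i ω a) = fun ω => ![eps i ω 0, eps i ω 1, 0] a := by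
      funext ω; rw [hepsh]
    rw [h]
    fin_cases a
    · simpa using hmean i 0
    · simpa using hmean i 1
    · simp
  have hEEmean : ∀ i (a b : Fin 3), ∫ ω, epsh i ω a * epsh i ω b ∂μpr = σ2 * D a b := by
    intro i a b
    have h : (fun ω => epsh i ω a * epsh i ω b)
        = fun ω => ![eps i ω 0, eps i ω 1, 0] a * ![eps i ω 0, eps i ω 1, 0] b := by
      funext ω; rw [hepsh]
    rw [h, hD]
    fin_cases a <;> fin_cases b
    · simpa [Matrix.diagonal] using hcov i 0 0
    · simpa [Matrix.diagonal] using hcov i 0 1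
    · simp [Matrix.diagonal]
    · simpa [Matrix.diagonal] using hcov i 1 0
    · simpa [Matrix.diagonal] using hcov i 1 1
    · simp [Matrix.diagonal]
    · simp [Matrix.diagonal]
    · simp [Matrix.diagonal]
    · simp [Matrix.diagonal]
  have hD01 : ∀ a b : Fin 3, D a b = 0 ∨ D a b = 1 := by
    intro a b
    rw [hD]
    fin_cases a <;> fin_cases b <;> simp [Matrix.diagonal]
  have hD0 : ∀ a b : Fin 3, 0 ≤ D a b := by
    intro a b; rcases hD01 a b with h | h <;> rw [h] <;> norm_num
  have hD1 : ∀ a b : Fin 3, D a b ≤ 1 := by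
    intro a b; rcases hD01 a b with h | h <;> rw [h] <;> norm_num
  -- the centered per-sample variables
  set U : ℕ → Fin 3 → Fin 3 → Ω → ℝ := fun i a b ω =>
    zo i a * epsh i ω b + epsh i ω a * zo i b + epsh i ω a * epsh i ω b - σ2 * D a b
    with hUdef
  have hUm : ∀ i (a b : Fin 3), Measurable (U i a b) := fun i a b =>
    (((measurable_const.mul (hEm i b)).add ((hEm i a).mul_const _)).add
      ((hEm i a).mul (hEm i b))).sub measurable_const
  have hUint : ∀ i (a b : Fin 3), Integrable (U i a b) μpr := fun i a b =>
    ((((hEint i b).const_mul _).add ((hEint i a).mul_const _)).add (hEEint i a b)).sub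
      (integrable_const _)
  have hUmean : ∀ i (a b : Fin 3), ∫ ω, U i a b ω ∂μpr = 0 := by
    intro i a b
    have h1 : Integrable (fun ω => zo i a * epsh i ω b) μpr := (hEint i b).const_mul _
    have h2 : Integrable (fun ω => epsh i ω a * zo i b) μpr := (hEint i a).mul_const _
    have h12 : Integrable (fun ω => zo i a * epsh i ω b + epsh i ω a * zo i b) μpr := h1.add h2
    have h123 : Integrable (fun ω => zo i a * epsh i ω b + epsh i ω a * zo i b
        + epsh i ω a * epsh i ω b) μpr := h12.add (hEEint i a b)
    simp only [hUdef]
    rw [integral_sub h123 (integrable_const _), integral_add h12 (hEEint i a b),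
      integral_add h1 h2, integral_const_mul, integral_mul_const, hEmean, hEmean, hEEmean,
      integral_const]
    simp
  -- integrability of U² and domination
  have hA_int : ∀ i (a b : Fin 3), Integrable (fun ω => (zo i a * epsh i ω b) ^ 2) μpr := by
    intro i a b
    exact ((hEEint i b b).const_mul ((zo i a) ^ 2)).congr (ae_of_all _ fun ω => by ring)
  have hB_int : ∀ i (a b : Fin 3), Integrable (fun ω => (epsh i ω a * zo i b) ^ 2) μpr := by
    intro i a b
    exact ((hEEint i a a).const_mul ((zo i b) ^ 2)).congr (ae_of_all _ fun ω => by ring)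
  have hg4 : ∀ i (a b : Fin 3), Integrable (fun ω =>
      4 * ((zo i a * epsh i ω b) ^ 2 + (epsh i ω a * zo i b) ^ 2
        + (epsh i ω a * epsh i ω b) ^ 2 + (σ2 * D a b) ^ 2)) μpr := by
    intro i a b
    exact ((((hA_int i a b).add (hB_int i a b)).add (hEEsqint i a b)).add
      (integrable_const _)).const_mul 4
  have hUptle : ∀ i (a b : Fin 3) ω, (U i a b ω) ^ 2 ≤
      4 * ((zo i a * epsh i ω b) ^ 2 + (epsh i ω a * zo i b) ^ 2
        + (epsh i ω a * epsh i ω b) ^ 2 + (σ2 * D a b) ^ 2) := by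
    intro i a b ω
    simp only [hUdef]
    nlinarith [sq_nonneg (zo i a * epsh i ω b - epsh i ω a * zo i b),
      sq_nonneg (zo i a * epsh i ω b - epsh i ω a * epsh i ω b),
      sq_nonneg (zo i a * epsh i ω b + σ2 * D a b),
      sq_nonneg (epsh i ω a * zo i b - epsh i ω a * epsh i ω b),
      sq_nonneg (epsh i ω a * zo i b + σ2 * D a b),
      sq_nonneg (epsh i ω a * epsh i ω b + σ2 * D a b)]
  have hUsqint : ∀ i (a b : Fin 3), Integrable (fun ω => (U i a b ω) ^ 2) μpr := by
    intro i a b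
    refine (hg4 i a b).mono' (((hUm i a b).pow_const 2).aestronglyMeasurable) ?_
    filter_upwards with ω
    rw [Real.norm_eq_abs, abs_of_nonneg (sq_nonneg _)]
    exact hUptle i a b ω
  -- independence of the U's
  have hUindep : ∀ (a b : Fin 3) {i j : ℕ}, i ≠ j → IndepFun (U i a b) (U j a b) μpr := by
    intro a b i j hij
    have hv : ∀ c : Fin 3, Measurable (fun v : Fin 2 → ℝ => ![v 0, v 1, 0] c) := by
      intro c
      fin_cases c
      · simpa using measurable_pi_apply (0 : Fin 2)
      · simpa using measurable_pi_apply (1 : Fin 2)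
      · simpa using (measurable_const : Measurable fun _ : Fin 2 → ℝ => (0:ℝ))
    have hcomp : ∀ k : ℕ, Measurable (fun v : Fin 2 → ℝ =>
        zo k a * (![v 0, v 1, 0] b) + (![v 0, v 1, 0] a) * zo k b
          + (![v 0, v 1, 0] a) * (![v 0, v 1, 0] b) - σ2 * D a b) := fun k =>
      (((measurable_const.mul (hv b)).add ((hv a).mul_const _)).add
        ((hv a).mul (hv b))).sub measurable_const
    have hUeq : ∀ k : ℕ, U k a b = (fun v : Fin 2 → ℝ =>
        zo k a * (![v 0, v 1, 0] b) + (![v 0, v 1, 0] a) * zo k b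
          + (![v 0, v 1, 0] a) * (![v 0, v 1, 0] b) - σ2 * D a b) ∘ eps k := by
      intro k
      funext ω
      simp only [hUdef, Function.comp_apply]
      rw [hepsh]
    rw [hUeq i, hUeq j]
    exact (hindep.indepFun hij).comp (hcomp i) (hcomp j)
  have hcross0 : ∀ (a b : Fin 3) {i j : ℕ}, i ≠ j →
      ∫ ω, U i a b ω * U j a b ω ∂μpr = 0 := by
    intro a b i j hij
    have h := (hUindep a b hij).integral_mul_eq_mul_integral (hUint i a b).aestronglyMeasurable
      (hUint j a b).aestronglyMeasurable
    simpa [Pi.mul_apply, hUmean] using h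
  have hcrossint : ∀ (a b : Fin 3) (i j : ℕ),
      Integrable (fun ω => U i a b ω * U j a b ω) μpr := by
    intro a b i j
    rcases eq_or_ne i j with rfl | hij
    · exact (hUsqint i a b).congr (ae_of_all _ fun ω => by ring)
    · exact (hUindep a b hij).integrable_mul (hUint i a b) (hUint j a b)
  -- second moment bound for U
  have hUsqnn : ∀ i (a b : Fin 3), 0 ≤ ∫ ω, (U i a b ω) ^ 2 ∂μpr :=
    fun i a b => integral_nonneg fun ω => sq_nonneg _
  set C0 : ℝ := 4 * (Cz ^ 2 * σ2 + σ2 * Cz ^ 2 + κ + σ2 ^ 2) with hC0def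
  have hC00 : 0 ≤ C0 := by
    have h1 : 0 ≤ Cz ^ 2 * σ2 := mul_nonneg (sq_nonneg _) hσ2
    nlinarith [sq_nonneg σ2]
  have hUsqbound : ∀ i (a b : Fin 3), ∫ ω, (U i a b ω) ^ 2 ∂μpr ≤ C0 := by
    intro i a b
    have hle : ∫ ω, (U i a b ω) ^ 2 ∂μpr ≤ ∫ ω,
        4 * ((zo i a * epsh i ω b) ^ 2 + (epsh i ω a * zo i b) ^ 2
          + (epsh i ω a * epsh i ω b) ^ 2 + (σ2 * D a b) ^ 2) ∂μpr :=
      integral_mono (hUsqint i a b) (hg4 i a b) fun ω => hUptle i a b ω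
    have h1 : ∫ ω, (zo i a * epsh i ω b) ^ 2 ∂μpr = (zo i a) ^ 2 * (σ2 * D b b) := by
      have hfeq : (fun ω => (zo i a * epsh i ω b) ^ 2)
          = fun ω => (zo i a) ^ 2 * (epsh i ω b * epsh i ω b) := by
        funext ω; ring
      rw [hfeq, integral_const_mul, hEEmean]
    have h2 : ∫ ω, (epsh i ω a * zo i b) ^ 2 ∂μpr = (zo i b) ^ 2 * (σ2 * D a a) := by
      have hfeq : (fun ω => (epsh i ω a * zo i b) ^ 2)
          = fun ω => (zo i b) ^ 2 * (epsh i ω a * epsh i ω a) := by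
        funext ω; ring
      rw [hfeq, integral_const_mul, hEEmean]
    have h3 : ∫ ω, (epsh i ω a * epsh i ω b) ^ 2 ∂μpr ≤ κ :=
      le_trans (integral_mono (hEEsqint i a b) (hm4int i) fun ω => hEmulsq_le i ω a b) (hm4 i)
    have h12 : Integrable (fun ω => (zo i a * epsh i ω b) ^ 2
        + (epsh i ω a * zo i b) ^ 2) μpr := (hA_int i a b).add (hB_int i a b)
    have h123 : Integrable (fun ω => (zo i a * epsh i ω b) ^ 2
        + (epsh i ω a * zo i b) ^ 2 + (epsh i ω a * epsh i ω b) ^ 2) μpr :=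
      h12.add (hEEsqint i a b)
    rw [integral_const_mul, integral_add h123 (integrable_const _),
      integral_add h12 (hEEsqint i a b), integral_add (hA_int i a b) (hB_int i a b),
      integral_const, h1, h2] at hle
    simp only [measure_univ, probReal_univ, ENNReal.toReal_one, smul_eq_mul, one_mul] at hle
    -- now bound the explicit expression by C0
    have haux : ∀ x d : ℝ, x ^ 2 ≤ Cz ^ 2 → 0 ≤ d → d ≤ 1 → x ^ 2 * (σ2 * d) ≤ Cz ^ 2 * σ2 := by
      intro x d hx hd0 hd1
      have hp1 : x ^ 2 * (σ2 * d) ≤ Cz ^ 2 * (σ2 * d) :=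
        mul_le_mul_of_nonneg_right hx (mul_nonneg hσ2 hd0)
      nlinarith [mul_nonneg (mul_nonneg (sq_nonneg Cz) hσ2) (sub_nonneg.mpr hd1)]
    have ha1 := haux (zo i a) (D b b) (hzb i a) (hD0 b b) (hD1 b b)
    have ha2 := haux (zo i b) (D a a) (hzb i b) (hD0 a a) (hD1 a a)
    have ha3 : (σ2 * D a b) ^ 2 ≤ σ2 ^ 2 := by
      rcases hD01 a b with h | h <;> rw [h] <;> nlinarith [sq_nonneg σ2]
    rw [hC0def]
    linarith
  set Ct : ℝ := Cy ^ 2 * Cy ^ 2 * C0 with hCtdef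
  have hCt0 : 0 ≤ Ct := mul_nonneg (mul_nonneg (sq_nonneg _) (sq_nonneg _)) hC00
  -- choice of N
  refine ⟨Real.sqrt (6561 * Ct / e) + 1, ?_⟩
  set N : ℝ := Real.sqrt (6561 * Ct / e) + 1 with hNdef
  have hN0 : 0 < N := by
    rw [hNdef]
    positivity
  have hNb : 6561 * Ct / N ^ 2 < e := by
    have hsq2 : Real.sqrt (6561 * Ct / e) ^ 2 = 6561 * Ct / e :=
      Real.sq_sqrt (div_nonneg (by linarith) he.le)
    have h1 : 6561 * Ct / e < N ^ 2 := by
      rw [hNdef]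
      nlinarith [Real.sqrt_nonneg (6561 * Ct / e)]
    rw [div_lt_iff₀ (pow_pos hN0 2)]
    have h2 := (div_lt_iff₀ he).mp h1
    linarith
  intro m
  rcases Nat.eq_zero_or_pos m with rfl | hm
  · have hempty : {ω | N / Real.sqrt ((0:ℕ) : ℝ) <
        Real.sqrt (∑ p : Fin 3 × Fin 3, ∑ q : Fin 3 × Fin 3,
          (Q 0 ω p q - Qo 0 p q - σ2 * Sm 0 p q) ^ 2)} = ∅ := by
      ext ω
      simp [hQ, hQo, hSm]
    rw [hempty]
    simpa using ENNReal.ofReal_pos.mpr he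
  have hm0 : (0:ℝ) < m := by exact_mod_cast hm
  have hmne : (m:ℝ) ≠ 0 := hm0.ne'
  have hsqm : 0 < Real.sqrt m := Real.sqrt_pos.mpr hm0
  set cc : ℝ := N / (9 * Real.sqrt m) with hccdef
  have hcc0 : 0 < cc := by
    rw [hccdef]
    exact div_pos hN0 (by positivity)
  have hccsq : cc ^ 2 = N ^ 2 / (81 * m) := by
    rw [hccdef, div_pow, mul_pow, Real.sq_sqrt hm0.le]
    norm_num
  -- the per-entry Chebyshev bound
  have key : ∀ p q : Fin 3 × Fin 3,
      μpr {ω | cc ≤ |Q m ω p q - Qo m p q - σ2 * Sm m p q|}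
        ≤ ENNReal.ofReal (81 * Ct / N ^ 2) := by
    intro p q
    set c : ℕ → ℝ := fun i => y i p.1 * y i q.1 with hcdef
    set F : Ω → ℝ := fun ω => (m : ℝ)⁻¹ * ∑ i ∈ Finset.range m, c i * U i p.2 q.2 ω with hFdef
    have hfe : ∀ ω, Q m ω p q - Qo m p q - σ2 * Sm m p q = F ω := by
      intro ω
      rw [hQ, hQo, hSm]
      simp only [hFdef, Finset.mul_sum, ← Finset.sum_sub_distrib]
      refine Finset.sum_congr rfl fun i _ => ?_
      have h1 : zh i ω p.2 = zo i p.2 + epsh i ω p.2 := by rw [hzh]; rfl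
      have h2 : zh i ω q.2 = zo i q.2 + epsh i ω q.2 := by rw [hzh]; rfl
      rw [h1, h2]
      simp only [hUdef, hcdef]
      ring
    have hFm : Measurable F := by
      rw [hFdef]
      exact measurable_const.mul
        (Finset.measurable_sum _ fun i _ => (hUm i p.2 q.2).const_mul (c i))
    have hexp : (fun ω => F ω ^ 2) = fun ω =>
        ((m : ℝ)⁻¹) ^ 2 * ∑ i ∈ Finset.range m, ∑ j ∈ Finset.range m,
          (c i * c j) * (U i p.2 q.2 ω * U j p.2 q.2 ω) := by
      funext ω
      simp only [hFdef]
      rw [mul_pow, pow_two (∑ i ∈ Finset.range m, c i * U i p.2 q.2 ω),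
        Finset.sum_mul_sum]
      congr 1
      exact Finset.sum_congr rfl fun i _ => Finset.sum_congr rfl fun j _ => by ring
    have hFint2 : Integrable (fun ω => F ω ^ 2) μpr := by
      rw [hexp]
      exact (integrable_finset_sum _ fun i _ => integrable_finset_sum _ fun j _ =>
        (hcrossint p.2 q.2 i j).const_mul _).const_mul _
    have hmom : ∫ ω, F ω ^ 2 ∂μpr ≤ Ct / m := by
      rw [hexp, integral_const_mul,
        integral_finset_sum _ (fun i _ => integrable_finset_sum _ fun j _ =>
          (hcrossint p.2 q.2 i j).const_mul _)]
      have hinner : ∀ i ∈ Finset.range m,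
          (∫ ω, ∑ j ∈ Finset.range m,
              (c i * c j) * (U i p.2 q.2 ω * U j p.2 q.2 ω) ∂μpr)
            = (c i) ^ 2 * ∫ ω, (U i p.2 q.2 ω) ^ 2 ∂μpr := by
        intro i hi
        rw [integral_finset_sum _ fun j _ => (hcrossint p.2 q.2 i j).const_mul _]
        simp only [integral_const_mul]
        rw [Finset.sum_eq_single_of_mem i hi
          (fun j _ hji => by rw [hcross0 p.2 q.2 (Ne.symm hji), mul_zero])]
        have hUU : (fun ω => U i p.2 q.2 ω * U i p.2 q.2 ω)
            = fun ω => (U i p.2 q.2 ω) ^ 2 := funext fun ω => (pow_two _).symm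
        rw [hUU]
        ring
      rw [Finset.sum_congr rfl hinner]
      have hsum_le : ∑ i ∈ Finset.range m, (c i) ^ 2 * ∫ ω, (U i p.2 q.2 ω) ^ 2 ∂μpr
          ≤ m * Ct := by
        have hterm : ∀ i ∈ Finset.range m,
            (c i) ^ 2 * ∫ ω, (U i p.2 q.2 ω) ^ 2 ∂μpr ≤ Ct := by
          intro i _
          have h1 : (c i) ^ 2 ≤ Cy ^ 2 * Cy ^ 2 := by
            rw [hcdef]
            simp only [mul_pow]
            exact mul_le_mul (hyb i p.1) (hyb i q.1) (sq_nonneg _) (sq_nonneg _)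
          have h2 := hUsqbound i p.2 q.2
          have h3 := hUsqnn i p.2 q.2
          calc (c i) ^ 2 * ∫ ω, (U i p.2 q.2 ω) ^ 2 ∂μpr
              ≤ (Cy ^ 2 * Cy ^ 2) * C0 :=
                mul_le_mul h1 h2 h3 (mul_nonneg (sq_nonneg _) (sq_nonneg _))
            _ = Ct := by rw [hCtdef]
        calc ∑ i ∈ Finset.range m, (c i) ^ 2 * ∫ ω, (U i p.2 q.2 ω) ^ 2 ∂μpr
            ≤ ∑ _i ∈ Finset.range m, Ct := Finset.sum_le_sum hterm
          _ = m * Ct := by rw [Finset.sum_const, Finset.card_range, nsmul_eq_mul]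
      calc ((m : ℝ)⁻¹) ^ 2 * ∑ i ∈ Finset.range m, (c i) ^ 2 * ∫ ω, (U i p.2 q.2 ω) ^ 2 ∂μpr
          ≤ ((m : ℝ)⁻¹) ^ 2 * (m * Ct) :=
            mul_le_mul_of_nonneg_left hsum_le (by positivity)
        _ = Ct / m := by field_simp
    -- Markov / Chebyshev
    have hseteq : {ω | cc ≤ |Q m ω p q - Qo m p q - σ2 * Sm m p q|}
        = {ω | ENNReal.ofReal (cc ^ 2) ≤ ENNReal.ofReal (F ω ^ 2)} := by
      ext ω
      simp only [Set.mem_setOf_eq, hfe ω,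
        ENNReal.ofReal_le_ofReal_iff (sq_nonneg (F ω))]
      constructor
      · intro h
        have h2 := pow_le_pow_left₀ hcc0.le h 2
        rwa [sq_abs] at h2
      · intro h
        nlinarith [abs_nonneg (F ω), sq_abs (F ω)]
    calc μpr {ω | cc ≤ |Q m ω p q - Qo m p q - σ2 * Sm m p q|}
        = μpr {ω | ENNReal.ofReal (cc ^ 2) ≤ ENNReal.ofReal (F ω ^ 2)} := by rw [hseteq]
      _ ≤ (∫⁻ ω, ENNReal.ofReal (F ω ^ 2) ∂μpr) / ENNReal.ofReal (cc ^ 2) :=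
          meas_ge_le_lintegral_div
            (ENNReal.measurable_ofReal.comp (hFm.pow_const 2)).aemeasurable
            (ENNReal.ofReal_pos.mpr (pow_pos hcc0 2)).ne' ENNReal.ofReal_ne_top
      _ = ENNReal.ofReal (∫ ω, F ω ^ 2 ∂μpr) / ENNReal.ofReal (cc ^ 2) := by
          rw [ofReal_integral_eq_lintegral_ofReal hFint2
            (ae_of_all _ fun ω => sq_nonneg _)]
      _ ≤ ENNReal.ofReal (Ct / m) / ENNReal.ofReal (cc ^ 2) :=
          ENNReal.div_le_div_right (ENNReal.ofReal_le_ofReal hmom) _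
      _ = ENNReal.ofReal ((Ct / m) / cc ^ 2) :=
          (ENNReal.ofReal_div_of_pos (pow_pos hcc0 2)).symm
      _ = ENNReal.ofReal (81 * Ct / N ^ 2) := by
          congr 1
          rw [hccsq]
          field_simp
  -- union bound over the 81 entries
  have hsub : {ω | N / Real.sqrt m <
      Real.sqrt (∑ p : Fin 3 × Fin 3, ∑ q : Fin 3 × Fin 3,
        (Q m ω p q - Qo m p q - σ2 * Sm m p q) ^ 2)}
      ⊆ ⋃ r : (Fin 3 × Fin 3) × (Fin 3 × Fin 3),
          {ω | cc ≤ |Q m ω r.1 r.2 - Qo m r.1 r.2 - σ2 * Sm m r.1 r.2|} := by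
    intro ω hω
    simp only [Set.mem_setOf_eq] at hω
    by_contra hcon
    simp only [Set.mem_iUnion, Set.mem_setOf_eq, not_exists, not_le] at hcon
    have hbound : ∀ p q : Fin 3 × Fin 3,
        (Q m ω p q - Qo m p q - σ2 * Sm m p q) ^ 2 ≤ cc ^ 2 := by
      intro p q
      have h := (hcon (p, q)).le
      have h2 := pow_le_pow_left₀ (abs_nonneg _) h 2
      rwa [sq_abs] at h2
    have hsum : ∑ p : Fin 3 × Fin 3, ∑ q : Fin 3 × Fin 3,
        (Q m ω p q - Qo m p q - σ2 * Sm m p q) ^ 2 ≤ 81 * cc ^ 2 := by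
      calc ∑ p : Fin 3 × Fin 3, ∑ q : Fin 3 × Fin 3,
            (Q m ω p q - Qo m p q - σ2 * Sm m p q) ^ 2
          ≤ ∑ _p : Fin 3 × Fin 3, ∑ _q : Fin 3 × Fin 3, cc ^ 2 :=
            Finset.sum_le_sum fun p _ => Finset.sum_le_sum fun q _ => hbound p q
        _ = 81 * cc ^ 2 := by
            simp [Finset.sum_const, Finset.card_univ]
            ring
    have h9 : Real.sqrt (∑ p : Fin 3 × Fin 3, ∑ q : Fin 3 × Fin 3,
        (Q m ω p q - Qo m p q - σ2 * Sm m p q) ^ 2) ≤ N / Real.sqrt m := by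
      have h1 := Real.sqrt_le_sqrt hsum
      have h2 : Real.sqrt (81 * cc ^ 2) = 9 * cc := by
        rw [show (81:ℝ) * cc ^ 2 = (9 * cc) ^ 2 by ring, Real.sqrt_sq (by linarith)]
      have h3 : 9 * cc = N / Real.sqrt m := by
        rw [hccdef]
        field_simp
      linarith
    exact absurd hω (not_lt.mpr h9)
  calc μpr {ω | N / Real.sqrt m <
        Real.sqrt (∑ p : Fin 3 × Fin 3, ∑ q : Fin 3 × Fin 3,
          (Q m ω p q - Qo m p q - σ2 * Sm m p q) ^ 2)}
      ≤ μpr (⋃ r : (Fin 3 × Fin 3) × (Fin 3 × Fin 3),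
          {ω | cc ≤ |Q m ω r.1 r.2 - Qo m r.1 r.2 - σ2 * Sm m r.1 r.2|}) :=
        measure_mono hsub
    _ ≤ ∑' r : (Fin 3 × Fin 3) × (Fin 3 × Fin 3),
          μpr {ω | cc ≤ |Q m ω r.1 r.2 - Qo m r.1 r.2 - σ2 * Sm m r.1 r.2|} :=
        measure_iUnion_le _
    _ ≤ ∑' _r : (Fin 3 × Fin 3) × (Fin 3 × Fin 3), ENNReal.ofReal (81 * Ct / N ^ 2) :=
        ENNReal.tsum_le_tsum fun r => key r.1 r.2
    _ = 81 * ENNReal.ofReal (81 * Ct / N ^ 2) := by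
        rw [tsum_fintype]
        simp [Finset.sum_const, Finset.card_univ]
    _ = ENNReal.ofReal (81 * (81 * Ct / N ^ 2)) := by
        rw [ENNReal.ofReal_mul (by norm_num : (0:ℝ) ≤ 81), ENNReal.ofReal_ofNat]
    _ < ENNReal.ofReal e := by
        rw [ENNReal.ofReal_lt_ofReal_iff he]
        have heq : 81 * (81 * Ct / N ^ 2) = 6561 * Ct / N ^ 2 := by ring
        rw [heq]
        exact hNb
end

section
/- Let R and S be real symmetric n×n matrices with R positive semidefinite and singular (0 is an eigenvalue of R), let σ² > 0, and suppose Q = R + σ²S is positive definite. For a symmetric positive definite matrix P define λ*(P) = sup_{‖v‖=1} (vᵀSv)/(vᵀPv). Then λ*(Q) = 1/σ², and there exist constants δ > 0 and C > 0 such that for every symmetric matrix Δ with ‖Δ‖ ≤ δ, the matrix Q + Δ is positive definite, λ*(Q+Δ) > 0, and |1/λ*(Q+Δ) − σ²| ≤ C‖Δ‖. (This Lipschitz stability of the noise-variance functional P ↦ 1/λ*(P) at P = Q yields the √m-convergence rate of the noise variance estimator.) -/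
open Matrix
open scoped Matrix.Norms.L2Operator

/-- `lamStar S P = sup_{‖v‖=1} (vᵀSv)/(vᵀPv)`; for `P` symmetric positive definite this
is the largest eigenvalue of `P⁻¹S`. -/
noncomputable def lamStar {n : ℕ} (S P : Matrix (Fin n) (Fin n) ℝ) : ℝ :=
  sSup {r | ∃ v : Fin n → ℝ, v ⬝ᵥ v = 1 ∧ r = (v ⬝ᵥ S.mulVec v) / (v ⬝ᵥ P.mulVec v)}

section Aux

variable {n : ℕ}

private lemma euclid_norm_sq (v : Fin n → ℝ) :
    ‖((EuclideanSpace.equiv (Fin n) ℝ).symm v : EuclideanSpace ℝ (Fin n))‖ ^ 2 = v ⬝ᵥ v := by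
  rw [EuclideanSpace.norm_eq, Real.sq_sqrt (by positivity)]
  simp [dotProduct, sq]

private lemma quad_abs_le (A : Matrix (Fin n) (Fin n) ℝ) (v : Fin n → ℝ) :
    |v ⬝ᵥ A.mulVec v| ≤ ‖A‖ * (v ⬝ᵥ v) := by
  set w := A.mulVec v with hw
  have hCS : (v ⬝ᵥ w) ^ 2 ≤ (v ⬝ᵥ v) * (w ⬝ᵥ w) := by
    have := Finset.sum_mul_sq_le_sq_mul_sq Finset.univ v w
    simpa [dotProduct, sq, mul_comm] using this
  have hAx := A.l2_opNorm_mulVec ((EuclideanSpace.equiv (Fin n) ℝ).symm v)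
  have hrw : (A *ᵥ ((EuclideanSpace.equiv (Fin n) ℝ).symm v)) = w := rfl
  rw [hrw] at hAx
  have hnn : (0:ℝ) ≤ ‖A‖ * ‖((EuclideanSpace.equiv (Fin n) ℝ).symm v : EuclideanSpace ℝ (Fin n))‖ :=
    mul_nonneg (norm_nonneg _) (norm_nonneg _)
  have hsq : w ⬝ᵥ w ≤ ‖A‖ ^ 2 * (v ⬝ᵥ v) := by
    have := mul_self_le_mul_self (norm_nonneg _) hAx
    calc w ⬝ᵥ w = ‖((EuclideanSpace.equiv (Fin n) ℝ).symm w : EuclideanSpace ℝ (Fin n))‖ ^ 2 :=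
          (euclid_norm_sq w).symm
      _ ≤ (‖A‖ * ‖((EuclideanSpace.equiv (Fin n) ℝ).symm v : EuclideanSpace ℝ (Fin n))‖) ^ 2 := by
          rw [sq, sq]; exact this
      _ = ‖A‖ ^ 2 * (v ⬝ᵥ v) := by rw [mul_pow, euclid_norm_sq]
  have hvv : (0:ℝ) ≤ v ⬝ᵥ v := by
    rw [← euclid_norm_sq]; positivity
  have hfinal : (v ⬝ᵥ w) ^ 2 ≤ (‖A‖ * (v ⬝ᵥ v)) ^ 2 := by
    calc (v ⬝ᵥ w) ^ 2 ≤ (v ⬝ᵥ v) * (w ⬝ᵥ w) := hCS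
      _ ≤ (v ⬝ᵥ v) * (‖A‖ ^ 2 * (v ⬝ᵥ v)) := by
          exact mul_le_mul_of_nonneg_left hsq hvv
      _ = (‖A‖ * (v ⬝ᵥ v)) ^ 2 := by ring
  have h := Real.sqrt_le_sqrt hfinal
  rwa [Real.sqrt_sq_eq_abs, Real.sqrt_sq (by positivity)] at h

private lemma unit_of_ne_zero {v : Fin n → ℝ} (hv : v ≠ 0) :
    ∃ c : ℝ, 0 < c ∧ (c • v) ⬝ᵥ (c • v) = 1 := by
  have hvv0 : (0:ℝ) ≤ v ⬝ᵥ v := by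
    simpa using dotProduct_star_self_nonneg v
  have hvvne : v ⬝ᵥ v ≠ 0 := by
    intro h
    exact hv (dotProduct_star_self_eq_zero.mp (by simpa using h))
  have hvv : 0 < v ⬝ᵥ v := lt_of_le_of_ne hvv0 (Ne.symm hvvne)
  refine ⟨(Real.sqrt (v ⬝ᵥ v))⁻¹, by positivity, ?_⟩
  have hs : Real.sqrt (v ⬝ᵥ v) * Real.sqrt (v ⬝ᵥ v) = v ⬝ᵥ v := Real.mul_self_sqrt hvv0
  have hsne : Real.sqrt (v ⬝ᵥ v) ≠ 0 := by positivity
  rw [smul_dotProduct, dotProduct_smul, smul_eq_mul, smul_eq_mul]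
  field_simp
  rw [Real.sq_sqrt hvv0]

private lemma exists_pd_lb (Q : Matrix (Fin n) (Fin n) ℝ) (hQpd : Q.PosDef)
    (u : Fin n → ℝ) (huu : u ⬝ᵥ u = 1) :
    ∃ μ : ℝ, 0 < μ ∧ ∀ v : Fin n → ℝ, μ * (v ⬝ᵥ v) ≤ v ⬝ᵥ Q.mulVec v := by
  set K : Set (Fin n → ℝ) := {v | v ⬝ᵥ v = 1} with hK
  have hmemu : u ∈ K := huu
  have hcont : Continuous fun v : Fin n → ℝ => v ⬝ᵥ Q.mulVec v := by
    simp only [dotProduct, Matrix.mulVec]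
    fun_prop
  have hcont2 : Continuous fun v : Fin n → ℝ => v ⬝ᵥ v := by
    simp only [dotProduct]; fun_prop
  have hclosed : IsClosed K := isClosed_eq hcont2 continuous_const
  have hbdd : Bornology.IsBounded K := by
    rw [Metric.isBounded_iff_subset_closedBall 0]
    refine ⟨1, fun v hv => ?_⟩
    simp only [Metric.mem_closedBall, dist_zero_right]
    rw [pi_norm_le_iff_of_nonneg zero_le_one]
    intro i
    have h1 : v i * v i ≤ v ⬝ᵥ v := by
      have : ∀ j ∈ Finset.univ, (0:ℝ) ≤ v j * v j := fun j _ => mul_self_nonneg _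
      simpa [dotProduct] using
        Finset.single_le_sum this (Finset.mem_univ i)
    have h2 : v i * v i ≤ 1 := by rw [hv] at h1; exact h1
    rw [Real.norm_eq_abs]
    exact abs_le_one_iff_mul_self_le_one.mpr h2
  have hcompact : IsCompact K := Metric.isCompact_of_isClosed_isBounded hclosed hbdd
  obtain ⟨x, hxmem, hxmin⟩ := hcompact.exists_isMinOn ⟨u, hmemu⟩ hcont.continuousOn
  have hxne : x ≠ 0 := by
    intro h
    rw [hK] at hxmem
    simp only [Set.mem_setOf_eq, h] at hxmem
    simp at hxmem
  have hμpos : 0 < x ⬝ᵥ Q.mulVec x := by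
    simpa using hQpd.dotProduct_mulVec_pos hxne
  refine ⟨x ⬝ᵥ Q.mulVec x, hμpos, fun v => ?_⟩
  by_cases hv : v = 0
  · simp [hv]
  · obtain ⟨c, hc, hcv⟩ := unit_of_ne_zero hv
    have hmem : c • v ∈ K := hcv
    have hmin := hxmin hmem
    have hval : (c • v) ⬝ᵥ Q.mulVec (c • v) = c * (c * (v ⬝ᵥ Q.mulVec v)) := by
      rw [Matrix.mulVec_smul, smul_dotProduct, dotProduct_smul,
        smul_eq_mul, smul_eq_mul]
    have hcvv : c * (c * (v ⬝ᵥ v)) = 1 := by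
      rw [← hcv, smul_dotProduct, dotProduct_smul, smul_eq_mul, smul_eq_mul]
    have hmin' : x ⬝ᵥ Q.mulVec x ≤ c * (c * (v ⬝ᵥ Q.mulVec v)) := by
      rw [← hval]; exact hmin
    nlinarith [hmin', hcvv, mul_pos hc hc]

private lemma master (n : ℕ) (R S Q : Matrix (Fin n) (Fin n) ℝ) (σ2 : ℝ) (hσ2 : 0 < σ2)
    (hRpsd : R.PosSemidef) (hQ : Q = R + σ2 • S)
    (u : Fin n → ℝ) (huu : u ⬝ᵥ u = 1) (huR : R.mulVec u = 0)
    (μ : ℝ) (hμ : 0 < μ) (hμle : ∀ v : Fin n → ℝ, μ * (v ⬝ᵥ v) ≤ v ⬝ᵥ Q.mulVec v)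
    (Δ : Matrix (Fin n) (Fin n) ℝ) (hΔ : ‖Δ‖ ≤ μ / 2) :
    μ / (σ2 * (μ + ‖Δ‖)) ≤ lamStar S (Q + Δ) ∧
      lamStar S (Q + Δ) ≤ μ / (σ2 * (μ - ‖Δ‖)) := by
  set d := ‖Δ‖ with hd
  have hd0 : 0 ≤ d := norm_nonneg _
  have hdec : ∀ v : Fin n → ℝ,
      v ⬝ᵥ Q.mulVec v = v ⬝ᵥ R.mulVec v + σ2 * (v ⬝ᵥ S.mulVec v) := by
    intro v
    rw [hQ, Matrix.add_mulVec, dotProduct_add, Matrix.smul_mulVec,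
      dotProduct_smul, smul_eq_mul]
  have hQΔ : ∀ v : Fin n → ℝ,
      v ⬝ᵥ (Q + Δ).mulVec v = v ⬝ᵥ Q.mulVec v + v ⬝ᵥ Δ.mulVec v := by
    intro v
    rw [Matrix.add_mulVec, dotProduct_add]
  have hR0 : ∀ v : Fin n → ℝ, 0 ≤ v ⬝ᵥ R.mulVec v := by
    intro v; simpa using hRpsd.dotProduct_mulVec_nonneg v
  -- upper bound on every element of the set
  have hub : ∀ r ∈ {r | ∃ v : Fin n → ℝ, v ⬝ᵥ v = 1 ∧
      r = (v ⬝ᵥ S.mulVec v) / (v ⬝ᵥ (Q + Δ).mulVec v)},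
      r ≤ μ / (σ2 * (μ - d)) := by
    rintro r ⟨v, hv1, rfl⟩
    have hq : μ ≤ v ⬝ᵥ Q.mulVec v := by
      have := hμle v; rw [hv1, mul_one] at this; exact this
    have he := quad_abs_le Δ v
    rw [hv1, mul_one] at he
    have habs := abs_le.mp he
    have hden : 0 < v ⬝ᵥ Q.mulVec v + v ⬝ᵥ Δ.mulVec v := by linarith
    rw [hQΔ v, div_le_div_iff₀ hden (by nlinarith)]
    nlinarith [hR0 v, hdec v, mul_nonneg (hR0 v) (show (0:ℝ) ≤ μ - d by linarith),
      mul_nonneg (show (0:ℝ) ≤ v ⬝ᵥ Q.mulVec v - μ by linarith) hd0,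
      mul_nonneg hμ.le (show (0:ℝ) ≤ v ⬝ᵥ Δ.mulVec v + d by linarith)]
  -- the distinguished element at u
  have hq0 : μ ≤ u ⬝ᵥ Q.mulVec u := by
    have := hμle u; rw [huu, mul_one] at this; exact this
  have hs0 : σ2 * (u ⬝ᵥ S.mulVec u) = u ⬝ᵥ Q.mulVec u := by
    have := hdec u
    rw [huR, dotProduct_zero, zero_add] at this
    linarith
  have he0 := quad_abs_le Δ u
  rw [huu, mul_one] at he0
  have habs0 := abs_le.mp he0
  have hden0 : 0 < u ⬝ᵥ Q.mulVec u + u ⬝ᵥ Δ.mulVec u := by linarith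
  have hmem : (u ⬝ᵥ S.mulVec u) / (u ⬝ᵥ (Q + Δ).mulVec u) ∈
      {r | ∃ v : Fin n → ℝ, v ⬝ᵥ v = 1 ∧
        r = (v ⬝ᵥ S.mulVec v) / (v ⬝ᵥ (Q + Δ).mulVec v)} := ⟨u, huu, rfl⟩
  have hlow : μ / (σ2 * (μ + d)) ≤ (u ⬝ᵥ S.mulVec u) / (u ⬝ᵥ (Q + Δ).mulVec u) := by
    rw [hQΔ u, div_le_div_iff₀ (by positivity) hden0]
    nlinarith [mul_nonneg (show (0:ℝ) ≤ u ⬝ᵥ Q.mulVec u - μ by linarith) hd0,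
      mul_nonneg hμ.le (show (0:ℝ) ≤ d - u ⬝ᵥ Δ.mulVec u by linarith)]
  have hbdd : BddAbove {r | ∃ v : Fin n → ℝ, v ⬝ᵥ v = 1 ∧
      r = (v ⬝ᵥ S.mulVec v) / (v ⬝ᵥ (Q + Δ).mulVec v)} := ⟨_, hub⟩
  constructor
  · exact le_trans hlow (le_csSup hbdd hmem)
  · exact csSup_le ⟨_, hmem⟩ hub

end Aux

/-- Lipschitz stability of the noise-variance functional `P ↦ 1/λ*(P)` at `P = Q`:
if `R` is symmetric PSD and singular, `σ² > 0`, and `Q = R + σ²S` is positive definite,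
then `λ*(Q) = 1/σ²`, and for all small symmetric perturbations `Δ` (in the operator
norm), `Q + Δ` is positive definite, `λ*(Q+Δ) > 0`, and
`|1/λ*(Q+Δ) − σ²| ≤ C‖Δ‖`. -/
theorem stmt12 (n : ℕ) (R S : Matrix (Fin n) (Fin n) ℝ)
    (hRsymm : R.IsSymm) (hSsymm : S.IsSymm)
    (hRpsd : R.PosSemidef)
    (hRsing : ∃ v : Fin n → ℝ, v ≠ 0 ∧ R.mulVec v = 0)
    (σ2 : ℝ) (hσ2 : 0 < σ2)
    (Q : Matrix (Fin n) (Fin n) ℝ) (hQ : Q = R + σ2 • S) (hQpd : Q.PosDef) :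
    lamStar S Q = 1 / σ2 ∧
    ∃ δ > (0 : ℝ), ∃ C > (0 : ℝ),
      ∀ Δ : Matrix (Fin n) (Fin n) ℝ, Δ.IsSymm → ‖Δ‖ ≤ δ →
        (Q + Δ).PosDef ∧ 0 < lamStar S (Q + Δ) ∧
        |1 / lamStar S (Q + Δ) - σ2| ≤ C * ‖Δ‖ := by
  obtain ⟨v0, hv0ne, hRv0⟩ := hRsing
  obtain ⟨c, hc, hcv⟩ := unit_of_ne_zero hv0ne
  set u : Fin n → ℝ := c • v0 with hu
  have huu : u ⬝ᵥ u = 1 := hcv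
  have huR : R.mulVec u = 0 := by
    rw [hu, Matrix.mulVec_smul, hRv0, smul_zero]
  obtain ⟨μ, hμ, hμle⟩ := exists_pd_lb Q hQpd u huu
  -- Part 1 : lamStar S Q = 1/σ2, via Δ = 0
  have h0 := master n R S Q σ2 hσ2 hRpsd hQ u huu huR μ hμ hμle 0
    (by rw [norm_zero]; positivity)
  rw [add_zero, norm_zero, add_zero, sub_zero] at h0
  have hμσ : μ / (σ2 * μ) = 1 / σ2 := by
    rw [mul_comm, ← div_div, div_self hμ.ne']
  have h1 : lamStar S Q = 1 / σ2 := by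
    rw [← hμσ]; exact le_antisymm h0.2 h0.1
  refine ⟨h1, μ / 2, by positivity, σ2 / μ, by positivity, ?_⟩
  intro Δ hΔsymm hΔle
  set d := ‖Δ‖ with hd
  have hd0 : 0 ≤ d := norm_nonneg _
  -- Positive definiteness of Q + Δ
  have hpd : (Q + Δ).PosDef := by
    refine Matrix.PosDef.of_dotProduct_mulVec_pos ?_ ?_
    · exact hQpd.1.add (by rwa [Matrix.IsHermitian,
        Matrix.conjTranspose_eq_transpose_of_trivial])
    · intro x hx
      have hxx : 0 < x ⬝ᵥ x := by
        have h0' : (0:ℝ) ≤ x ⬝ᵥ x := by simpa using dotProduct_star_self_nonneg x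
        have hne : x ⬝ᵥ x ≠ 0 := by
          intro h
          exact hx (dotProduct_star_self_eq_zero.mp (by simpa using h))
        exact lt_of_le_of_ne h0' (Ne.symm hne)
      have hQx := hμle x
      have hΔx := quad_abs_le Δ x
      have habs := abs_le.mp hΔx
      have : 0 < x ⬝ᵥ (Q + Δ).mulVec x := by
        rw [Matrix.add_mulVec, dotProduct_add]
        nlinarith
      simpa using this
  have hm := master n R S Q σ2 hσ2 hRpsd hQ u huu huR μ hμ hμle Δ hΔle
  set lam := lamStar S (Q + Δ) with hlam
  have hL : μ / (σ2 * (μ + d)) ≤ lam := hm.1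
  have hU : lam ≤ μ / (σ2 * (μ - d)) := hm.2
  have hLpos : 0 < μ / (σ2 * (μ + d)) := by positivity
  have hlampos : 0 < lam := lt_of_lt_of_le hLpos hL
  have hμd : 0 < μ - d := by
    have : d ≤ μ / 2 := hΔle
    linarith
  refine ⟨hpd, hlampos, ?_⟩
  have h1' : 1 / lam ≤ 1 / (μ / (σ2 * (μ + d))) := one_div_le_one_div_of_le hLpos hL
  have h2' : 1 / (μ / (σ2 * (μ - d))) ≤ 1 / lam := by
    apply one_div_le_one_div_of_le hlampos hU
  rw [one_div_div] at h1' h2'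
  have e1 : σ2 * (μ + d) / μ = σ2 + (σ2 / μ) * d := by field_simp
  have e2 : σ2 * (μ - d) / μ = σ2 - (σ2 / μ) * d := by field_simp
  rw [e1] at h1'
  rw [e2] at h2'
  rw [abs_le]
  constructor <;> linarith
end
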